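/- (InfoMat total-sum identity) Let (X^n, Y^n) be jointly distributed random sequences with finite alphabets. Then the mutual information equals the sum of all entries of the information matrix: I(X^n; Y^n) = Σ_{i=1}^n Σ_{j=1}^n I(X_i; Y_j | X^{i-1}, Y^{j-1}). Moreover, the upper-triangular part (entries with j ≥ i) sums to I(X^n→Y^n) and the strictly lower-triangular part (entries with j < i) sums to I(DY^n→X^n). -/
import Mathlib


open Finset

noncomputable section

-- Probability of the event `E` under the pmf `p` on a finite sample space `Ω`.
open Classical in
def pr {Ω : Type*} [Fintype Ω] (p : Ω → ℝ) (E : Ω → Prop) : ℝ :=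
  ∑ ω, if E ω then p ω else 0

-- Shannon entropy `H(U)` (pointwise form).
def entropy {Ω α : Type*} [Fintype Ω] (p : Ω → ℝ) (U : Ω → α) : ℝ :=
  -∑ ω, p ω * Real.log (pr p (fun ω' => U ω' = U ω))

-- Conditional Shannon entropy `H(U | V)`.
def condEntropy {Ω α β : Type*} [Fintype Ω] (p : Ω → ℝ) (U : Ω → α) (V : Ω → β) : ℝ :=
  -∑ ω, p ω * Real.log
      (pr p (fun ω' => U ω' = U ω ∧ V ω' = V ω) / pr p (fun ω' => V ω' = V ω))

-- Mutual information `I(U ; V)`.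
def mutualInfo {Ω α β : Type*} [Fintype Ω] (p : Ω → ℝ) (U : Ω → α) (V : Ω → β) : ℝ :=
  ∑ ω, p ω * Real.log
      (pr p (fun ω' => U ω' = U ω ∧ V ω' = V ω) /
        (pr p (fun ω' => U ω' = U ω) * pr p (fun ω' => V ω' = V ω)))

-- Conditional mutual information `I(U ; V | W)`.
def condMutualInfo {Ω α β γ : Type*} [Fintype Ω] (p : Ω → ℝ)
    (U : Ω → α) (V : Ω → β) (W : Ω → γ) : ℝ :=
  ∑ ω, p ω * Real.log
      ((pr p (fun ω' => U ω' = U ω ∧ V ω' = V ω ∧ W ω' = W ω) *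
          pr p (fun ω' => W ω' = W ω)) /
        (pr p (fun ω' => U ω' = U ω ∧ W ω' = W ω) *
          pr p (fun ω' => V ω' = V ω ∧ W ω' = W ω)))

-- The prefix `(X_0, …, X_{i-1})` of a random sequence `X`.
def prefixSeq {Ω 𝒳 : Type*} (X : Ω → ℕ → 𝒳) (i : ℕ) : Ω → (Fin i → 𝒳) :=
  fun ω j => X ω (j : ℕ)

-- Directed information `I(X^n → Y^n) = ∑_{i=1}^n I(X^i ; Y_i | Y^{i-1})` (0-indexed).
def directedInfo {Ω 𝒳 𝒴 : Type*} [Fintype Ω] (p : Ω → ℝ)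
    (X : Ω → ℕ → 𝒳) (Y : Ω → ℕ → 𝒴) (n : ℕ) : ℝ :=
  ∑ i ∈ Finset.range n,
    condMutualInfo p (prefixSeq X (i + 1)) (fun ω => Y ω i) (prefixSeq Y i)


section InfoMatAux

variable {Ω : Type*} [Fintype Ω]

lemma pr_congr (p : Ω → ℝ) {E F : Ω → Prop} (h : ∀ ω, E ω ↔ F ω) : pr p E = pr p F := by
  unfold pr
  refine Finset.sum_congr rfl fun ω _ => ?_
  by_cases hE : E ω
  · simp [hE, (h ω).mp hE]
  · rw [if_neg hE, if_neg (fun hF => hE ((h ω).mpr hF))]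

lemma pr_pos {p : Ω → ℝ} (hp0 : ∀ ω, 0 ≤ p ω) {E : Ω → Prop} {ω : Ω}
    (hω : E ω) (hpω : 0 < p ω) : 0 < pr p E := by
  classical
  unfold pr
  have : (if E ω then p ω else 0) = p ω := by simp [hω]
  calc (0:ℝ) < p ω := hpω
    _ ≤ _ := by
      rw [← this]
      exact Finset.single_le_sum (f := fun ω => if E ω then p ω else 0)
        (fun i _ => by by_cases h : E i <;> simp [h, hp0 i]) (Finset.mem_univ ω)

/-- The "negative pointwise entropy" `∑ ω, p ω * log P(U = U ω)`. -/
def negEnt {α : Type*} (p : Ω → ℝ) (U : Ω → α) : ℝ :=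
  ∑ ω, p ω * Real.log (pr p (fun ω' => U ω' = U ω))

lemma negEnt_congr {α β : Type*} (p : Ω → ℝ) {U : Ω → α} {V : Ω → β}
    (h : ∀ ω' ω, U ω' = U ω ↔ V ω' = V ω) : negEnt p U = negEnt p V := by
  unfold negEnt
  exact Finset.sum_congr rfl fun ω _ => by rw [pr_congr p (fun ω' => h ω' ω)]

lemma condMutualInfo_eq {α β γ : Type*} (p : Ω → ℝ) (hp0 : ∀ ω, 0 ≤ p ω)
    (U : Ω → α) (V : Ω → β) (W : Ω → γ) :
    condMutualInfo p U V W =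
      negEnt p (fun ω => (U ω, V ω, W ω)) + negEnt p W
        - negEnt p (fun ω => (U ω, W ω)) - negEnt p (fun ω => (V ω, W ω)) := by
  unfold condMutualInfo negEnt
  rw [← Finset.sum_add_distrib, ← Finset.sum_sub_distrib, ← Finset.sum_sub_distrib]
  refine Finset.sum_congr rfl fun ω _ => ?_
  rcases (hp0 ω).eq_or_lt with h | h
  · simp [← h]
  · have h1 : pr p (fun ω' => (U ω', V ω', W ω') = (U ω, V ω, W ω)) =
        pr p (fun ω' => U ω' = U ω ∧ V ω' = V ω ∧ W ω' = W ω) :=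
      pr_congr p (fun ω' => by simp [Prod.ext_iff])
    have h2 : pr p (fun ω' => (U ω', W ω') = (U ω, W ω)) =
        pr p (fun ω' => U ω' = U ω ∧ W ω' = W ω) :=
      pr_congr p (fun ω' => by simp [Prod.ext_iff])
    have h3 : pr p (fun ω' => (V ω', W ω') = (V ω, W ω)) =
        pr p (fun ω' => V ω' = V ω ∧ W ω' = W ω) :=
      pr_congr p (fun ω' => by simp [Prod.ext_iff])
    rw [h1, h2, h3]
    have ha : 0 < pr p (fun ω' => U ω' = U ω ∧ V ω' = V ω ∧ W ω' = W ω) :=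
      pr_pos hp0 ⟨rfl, rfl, rfl⟩ h
    have hb : 0 < pr p (fun ω' => U ω' = U ω ∧ W ω' = W ω) := pr_pos hp0 ⟨rfl, rfl⟩ h
    have hc : 0 < pr p (fun ω' => V ω' = V ω ∧ W ω' = W ω) := pr_pos hp0 ⟨rfl, rfl⟩ h
    have hd : 0 < pr p (fun ω' => W ω' = W ω) := pr_pos hp0 rfl h
    rw [Real.log_div (by positivity) (by positivity),
      Real.log_mul ha.ne' hd.ne', Real.log_mul hb.ne' hc.ne']
    ring

lemma mutualInfo_eq {α β : Type*} (p : Ω → ℝ) (hp0 : ∀ ω, 0 ≤ p ω)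
    (U : Ω → α) (V : Ω → β) :
    mutualInfo p U V =
      negEnt p (fun ω => (U ω, V ω)) - negEnt p U - negEnt p V := by
  unfold mutualInfo negEnt
  rw [← Finset.sum_sub_distrib, ← Finset.sum_sub_distrib]
  refine Finset.sum_congr rfl fun ω _ => ?_
  rcases (hp0 ω).eq_or_lt with h | h
  · simp [← h]
  · have h1 : pr p (fun ω' => (U ω', V ω') = (U ω, V ω)) =
        pr p (fun ω' => U ω' = U ω ∧ V ω' = V ω) :=
      pr_congr p (fun ω' => by simp [Prod.ext_iff])
    rw [h1]
    have ha : 0 < pr p (fun ω' => U ω' = U ω ∧ V ω' = V ω) := pr_pos hp0 ⟨rfl, rfl⟩ h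
    have hb : 0 < pr p (fun ω' => U ω' = U ω) := pr_pos hp0 rfl h
    have hc : 0 < pr p (fun ω' => V ω' = V ω) := pr_pos hp0 rfl h
    rw [Real.log_div ha.ne' (by positivity), Real.log_mul hb.ne' hc.ne']
    ring

lemma prefix_succ_iff {𝒳 : Type*} (X : Ω → ℕ → 𝒳) (i : ℕ) (ω' ω : Ω) :
    prefixSeq X (i+1) ω' = prefixSeq X (i+1) ω ↔
      X ω' i = X ω i ∧ prefixSeq X i ω' = prefixSeq X i ω := by
  constructor
  · intro h
    refine ⟨?_, funext fun k => ?_⟩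
    · have := congrFun h (Fin.last i)
      simpa [prefixSeq] using this
    · have := congrFun h k.castSucc
      simpa [prefixSeq] using this
  · rintro ⟨h1, h2⟩
    funext k
    refine Fin.lastCases ?_ (fun j => ?_) k
    · simpa [prefixSeq] using h1
    · have := congrFun h2 j
      simpa [prefixSeq] using this

variable {𝒳 𝒴 : Type*}

/-- Entry `E i j = ∑ ω, p ω * log P(X^i = X^i(ω), Y^j = Y^j(ω))`. -/
def pairEnt (p : Ω → ℝ) (X : Ω → ℕ → 𝒳) (Y : Ω → ℕ → 𝒴) (i j : ℕ) : ℝ :=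
  negEnt p (fun ω => (prefixSeq X i ω, prefixSeq Y j ω))

variable (p : Ω → ℝ) (X : Ω → ℕ → 𝒳) (Y : Ω → ℕ → 𝒴)

lemma pairEnt_zero_zero (hp1 : ∑ ω, p ω = 1) : pairEnt p X Y 0 0 = 0 := by
  unfold pairEnt negEnt
  have h1 : ∀ ω : Ω, pr p (fun ω' =>
      (prefixSeq X 0 ω', prefixSeq Y 0 ω') = (prefixSeq X 0 ω, prefixSeq Y 0 ω)) = 1 := by
    intro ω
    rw [pr_congr p (F := fun _ => True)
      (fun ω' => by simp [Prod.ext_iff, eq_iff_true_of_subsingleton])]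
    unfold pr
    simpa using hp1
  refine Finset.sum_eq_zero fun ω _ => ?_
  rw [h1 ω, Real.log_one, mul_zero]

lemma infoMat_entry (hp0 : ∀ ω, 0 ≤ p ω) (i j : ℕ) :
    condMutualInfo p (fun ω => X ω i) (fun ω => Y ω j)
        (fun ω => (prefixSeq X i ω, prefixSeq Y j ω)) =
      pairEnt p X Y (i+1) (j+1) + pairEnt p X Y i j
        - pairEnt p X Y (i+1) j - pairEnt p X Y i (j+1) := by
  rw [condMutualInfo_eq p hp0]
  have c1 : negEnt p (fun ω => (X ω i, Y ω j, (prefixSeq X i ω, prefixSeq Y j ω))) =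
      pairEnt p X Y (i+1) (j+1) :=
    negEnt_congr p (fun ω' ω => by simp only [Prod.ext_iff, prefix_succ_iff] <;> tauto)
  have c2 : negEnt p (fun ω => (X ω i, (prefixSeq X i ω, prefixSeq Y j ω))) =
      pairEnt p X Y (i+1) j :=
    negEnt_congr p (fun ω' ω => by simp only [Prod.ext_iff, prefix_succ_iff] <;> tauto)
  have c3 : negEnt p (fun ω => (Y ω j, (prefixSeq X i ω, prefixSeq Y j ω))) =
      pairEnt p X Y i (j+1) :=
    negEnt_congr p (fun ω' ω => by simp only [Prod.ext_iff, prefix_succ_iff] <;> tauto)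
  rw [c1, c2, c3]
  rfl

lemma directed_entry (hp0 : ∀ ω, 0 ≤ p ω) (i : ℕ) :
    condMutualInfo p (prefixSeq X (i+1)) (fun ω => Y ω i) (prefixSeq Y i) =
      pairEnt p X Y (i+1) (i+1) + pairEnt p X Y 0 i
        - pairEnt p X Y (i+1) i - pairEnt p X Y 0 (i+1) := by
  rw [condMutualInfo_eq p hp0]
  have c1 : negEnt p (fun ω => (prefixSeq X (i+1) ω, Y ω i, prefixSeq Y i ω)) =
      pairEnt p X Y (i+1) (i+1) :=
    negEnt_congr p (fun ω' ω => by
      simp only [Prod.ext_iff, prefix_succ_iff] <;> tauto)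
  have c2 : negEnt p (prefixSeq Y i) = pairEnt p X Y 0 i :=
    negEnt_congr p (fun ω' ω => by
      simp only [Prod.ext_iff, eq_iff_true_of_subsingleton] <;> tauto)
  have c3 : negEnt p (fun ω => (prefixSeq X (i+1) ω, prefixSeq Y i ω)) =
      pairEnt p X Y (i+1) i := rfl
  have c4 : negEnt p (fun ω => (Y ω i, prefixSeq Y i ω)) = pairEnt p X Y 0 (i+1) :=
    negEnt_congr p (fun ω' ω => by
      simp only [Prod.ext_iff, prefix_succ_iff, eq_iff_true_of_subsingleton] <;> tauto)
  rw [c1, c2, c3, c4]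

lemma reverse_entry (hp0 : ∀ ω, 0 ≤ p ω) (i : ℕ) :
    condMutualInfo p (prefixSeq Y i) (fun ω => X ω i) (prefixSeq X i) =
      pairEnt p X Y (i+1) i + pairEnt p X Y i 0
        - pairEnt p X Y i i - pairEnt p X Y (i+1) 0 := by
  rw [condMutualInfo_eq p hp0]
  have c1 : negEnt p (fun ω => (prefixSeq Y i ω, X ω i, prefixSeq X i ω)) =
      pairEnt p X Y (i+1) i :=
    negEnt_congr p (fun ω' ω => by
      simp only [Prod.ext_iff, prefix_succ_iff] <;> tauto)
  have c2 : negEnt p (prefixSeq X i) = pairEnt p X Y i 0 :=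
    negEnt_congr p (fun ω' ω => by
      simp only [Prod.ext_iff, eq_iff_true_of_subsingleton] <;> tauto)
  have c3 : negEnt p (fun ω => (prefixSeq Y i ω, prefixSeq X i ω)) =
      pairEnt p X Y i i :=
    negEnt_congr p (fun ω' ω => by simp only [Prod.ext_iff] <;> tauto)
  have c4 : negEnt p (fun ω => (X ω i, prefixSeq X i ω)) = pairEnt p X Y (i+1) 0 :=
    negEnt_congr p (fun ω' ω => by
      simp only [Prod.ext_iff, prefix_succ_iff, eq_iff_true_of_subsingleton] <;> tauto)
  rw [c1, c2, c3, c4]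

lemma mutualInfo_pairEnt (hp0 : ∀ ω, 0 ≤ p ω) (n : ℕ) :
    mutualInfo p (prefixSeq X n) (prefixSeq Y n) =
      pairEnt p X Y n n - pairEnt p X Y n 0 - pairEnt p X Y 0 n := by
  rw [mutualInfo_eq p hp0]
  have c1 : negEnt p (fun ω => (prefixSeq X n ω, prefixSeq Y n ω)) =
      pairEnt p X Y n n := rfl
  have c2 : negEnt p (prefixSeq X n) = pairEnt p X Y n 0 :=
    negEnt_congr p (fun ω' ω => by
      simp only [Prod.ext_iff, eq_iff_true_of_subsingleton] <;> tauto)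
  have c3 : negEnt p (prefixSeq Y n) = pairEnt p X Y 0 n :=
    negEnt_congr p (fun ω' ω => by
      simp only [Prod.ext_iff, eq_iff_true_of_subsingleton] <;> tauto)
  rw [c1, c2, c3]

end InfoMatAux


lemma sum_filter_le_eq_Ico (i n : ℕ) (g : ℕ → ℝ) :
    ∑ j ∈ Finset.range n, (if i ≤ j then g j else 0) = ∑ j ∈ Finset.Ico i n, g j := by
  rw [← Finset.sum_filter]
  congr 1
  ext j
  simp only [Finset.mem_filter, Finset.mem_range, Finset.mem_Ico]
  tauto

lemma sum_filter_lt_eq_range {i n : ℕ} (h : i ≤ n) (g : ℕ → ℝ) :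
    ∑ j ∈ Finset.range n, (if j < i then g j else 0) = ∑ j ∈ Finset.range i, g j := by
  rw [← Finset.sum_filter]
  congr 1
  ext j
  simp only [Finset.mem_filter, Finset.mem_range]
  omega

lemma sum_Ico_sub' (f : ℕ → ℝ) {i n : ℕ} (h : i ≤ n) :
    ∑ j ∈ Finset.Ico i n, (f (j + 1) - f j) = f n - f i := by
  have h0 := Finset.sum_Ico_consecutive (fun j => f (j + 1) - f j) (Nat.zero_le i) h
  have h1 := Finset.sum_range_sub f n
  have h2 := Finset.sum_range_sub f i
  simp only [← Finset.range_eq_Ico] at h0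
  linarith

/-- InfoMat total-sum identity: the mutual information equals the
sum of all entries `I(X_i; Y_j | X^{i-1}, Y^{j-1})` of the information matrix;
moreover the upper-triangular part (`j ≥ i`) sums to `I(X^n→Y^n)` and the strictly
lower-triangular part (`j < i`) sums to `I(DY^n→X^n)`. -/
theorem infoMat_sums
    {Ω 𝒳 𝒴 : Type*} [Fintype Ω] [Fintype 𝒳] [Fintype 𝒴]
    (p : Ω → ℝ) (hp0 : ∀ ω, 0 ≤ p ω) (hp1 : ∑ ω, p ω = 1)
    (X : Ω → ℕ → 𝒳) (Y : Ω → ℕ → 𝒴) (n : ℕ) :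
    (mutualInfo p (prefixSeq X n) (prefixSeq Y n) =
        ∑ i ∈ Finset.range n, ∑ j ∈ Finset.range n,
          condMutualInfo p (fun ω => X ω i) (fun ω => Y ω j)
            (fun ω => (prefixSeq X i ω, prefixSeq Y j ω))) ∧
      (∑ i ∈ Finset.range n, ∑ j ∈ Finset.range n,
          (if i ≤ j then
            condMutualInfo p (fun ω => X ω i) (fun ω => Y ω j)
              (fun ω => (prefixSeq X i ω, prefixSeq Y j ω))
          else 0) = directedInfo p X Y n) ∧
      ∑ i ∈ Finset.range n, ∑ j ∈ Finset.range n,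
          (if j < i then
            condMutualInfo p (fun ω => X ω i) (fun ω => Y ω j)
              (fun ω => (prefixSeq X i ω, prefixSeq Y j ω))
          else 0) =
        ∑ i ∈ Finset.range n,
          condMutualInfo p (prefixSeq Y i) (fun ω => X ω i) (prefixSeq X i) := by
  have hE00 : pairEnt p X Y 0 0 = 0 := pairEnt_zero_zero p X Y hp1
  have er : ∀ i j : ℕ,
      pairEnt p X Y (i+1) (j+1) + pairEnt p X Y i j
          - pairEnt p X Y (i+1) j - pairEnt p X Y i (j+1) =
        (pairEnt p X Y (i+1) (j+1) - pairEnt p X Y (i+1) j)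
          - (pairEnt p X Y i (j+1) - pairEnt p X Y i j) := fun i j => by ring
  refine ⟨?_, ?_, ?_⟩
  · -- total sum
    rw [mutualInfo_pairEnt p X Y hp0 n]
    simp only [infoMat_entry p X Y hp0, er]
    have inner : ∀ i ∈ Finset.range n,
        (∑ j ∈ Finset.range n,
          ((pairEnt p X Y (i+1) (j+1) - pairEnt p X Y (i+1) j)
            - (pairEnt p X Y i (j+1) - pairEnt p X Y i j))) =
        (pairEnt p X Y (i+1) n - pairEnt p X Y (i+1) 0)
          - (pairEnt p X Y i n - pairEnt p X Y i 0) := by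
      intro i _
      rw [Finset.sum_sub_distrib,
        Finset.sum_range_sub (fun j => pairEnt p X Y (i+1) j),
        Finset.sum_range_sub (fun j => pairEnt p X Y i j)]
    rw [Finset.sum_congr rfl inner]
    have e2 : ∀ i ∈ Finset.range n,
        (pairEnt p X Y (i+1) n - pairEnt p X Y (i+1) 0)
            - (pairEnt p X Y i n - pairEnt p X Y i 0) =
          (pairEnt p X Y (i+1) n - pairEnt p X Y i n)
            - (pairEnt p X Y (i+1) 0 - pairEnt p X Y i 0) := fun i _ => by ring
    rw [Finset.sum_congr rfl e2, Finset.sum_sub_distrib,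
      Finset.sum_range_sub (fun i => pairEnt p X Y i n),
      Finset.sum_range_sub (fun i => pairEnt p X Y i 0)]
    linarith
  · -- upper triangular = directed information
    simp only [infoMat_entry p X Y hp0, er]
    unfold directedInfo
    rw [Finset.sum_congr rfl (fun i (_ : i ∈ Finset.range n) => directed_entry p X Y hp0 i)]
    have inner : ∀ i ∈ Finset.range n,
        (∑ j ∈ Finset.range n,
          if i ≤ j then
            ((pairEnt p X Y (i+1) (j+1) - pairEnt p X Y (i+1) j)
              - (pairEnt p X Y i (j+1) - pairEnt p X Y i j)) else 0) =
        ((pairEnt p X Y (i+1) n - pairEnt p X Y i n)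
          - (pairEnt p X Y (i+1) (i+1) - pairEnt p X Y i i))
          + (pairEnt p X Y 0 (i+1) - pairEnt p X Y 0 i)
          + (pairEnt p X Y (i+1) (i+1) + pairEnt p X Y 0 i
              - pairEnt p X Y (i+1) i - pairEnt p X Y 0 (i+1)) := by
      intro i hi
      have hin : i ≤ n := le_of_lt (Finset.mem_range.mp hi)
      rw [sum_filter_le_eq_Ico, Finset.sum_sub_distrib,
        sum_Ico_sub' (fun j => pairEnt p X Y (i+1) j) hin,
        sum_Ico_sub' (fun j => pairEnt p X Y i j) hin]
      ring
    rw [Finset.sum_congr rfl inner, Finset.sum_add_distrib, Finset.sum_add_distrib,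
      Finset.sum_sub_distrib,
      Finset.sum_range_sub (fun i => pairEnt p X Y i n),
      Finset.sum_range_sub (fun i => pairEnt p X Y i i),
      Finset.sum_range_sub (fun i => pairEnt p X Y 0 i)]
    ring
  · -- lower triangular = delayed reverse directed information
    simp only [infoMat_entry p X Y hp0, er]
    refine Finset.sum_congr rfl fun i hi => ?_
    have hin : i ≤ n := le_of_lt (Finset.mem_range.mp hi)
    rw [reverse_entry p X Y hp0 i, sum_filter_lt_eq_range hin, Finset.sum_sub_distrib,
      Finset.sum_range_sub (fun j => pairEnt p X Y (i+1) j),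
      Finset.sum_range_sub (fun j => pairEnt p X Y i j)]
    ring
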